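/- Simulation (model-error) bound for discounted visitation distributions (Section B.2 of the supplement): for every policy π and every (a,s) ∈ A × S, D_TV(d^π(·|a,s), d^{π,p̂}(·|a,s)) ≤ (γ/(1−γ)) Σ_{a'∈A, s'∈S} q^π(a',s';a,s) D_TV(p(·|a',s'), p̂(·|a',s')). -/

import Mathlib

namespace VEPO

variable {S A : Type} [Fintype S] [Fintype A] [DecidableEq S] [DecidableEq A]

/-- A probability mass function on a finite type, represented as a real-valued function. -/
def IsPMF {X : Type} [Fintype X] (f : X → ℝ) : Prop :=
  (∀ x, 0 ≤ f x) ∧ ∑ x : X, f x = 1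

/-- A transition kernel: for each action-state pair `(a, s)`, a pmf `p a s` on next states. -/
def IsKernel (p : A → S → S → ℝ) : Prop := ∀ a s, IsPMF (p a s)

/-- A policy: for each state `s`, a pmf `π s` on actions. -/
def IsPolicy (π : S → A → ℝ) : Prop := ∀ s, IsPMF (π s)

/-- The `t`-step visitation probability `p_t^π(s' | a, s)`. -/
def visit (p : A → S → S → ℝ) (π : S → A → ℝ) : ℕ → A → S → S → ℝ
  | 0, _, s, s' => if s' = s then 1 else 0
  | 1, a, s, s' => p a s s'
  | (t + 2), a, s, s' =>
      ∑ s'' : S, visit p π (t + 1) a s s'' * ∑ a'' : A, π s'' a'' * p a'' s'' s'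

/-- The Q-function `Q^π(a, s)`. -/
noncomputable def Qfun (p : A → S → S → ℝ) (r : S → A → ℝ) (γ : ℝ)
    (π : S → A → ℝ) (a : A) (s : S) : ℝ :=
  r s a + ∑' t : ℕ, γ ^ (t + 1) *
    ∑ s' : S, visit p π (t + 1) a s s' * ∑ a' : A, π s' a' * r s' a'

/-- The value function `V^π(s)`. -/
noncomputable def Vfun (p : A → S → S → ℝ) (r : S → A → ℝ) (γ : ℝ)
    (π : S → A → ℝ) (s : S) : ℝ :=
  ∑ a : A, π s a * Qfun p r γ π a s

/-- The advantage function `A^π(a, s)`. -/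
noncomputable def Adv (p : A → S → S → ℝ) (r : S → A → ℝ) (γ : ℝ)
    (π : S → A → ℝ) (a : A) (s : S) : ℝ :=
  Qfun p r γ π a s - Vfun p r γ π s

/-- The conditional discounted visitation probability `d^π(s' | a, s)`. -/
noncomputable def dvisit (p : A → S → S → ℝ) (γ : ℝ) (π : S → A → ℝ)
    (s' : S) (a : A) (s : S) : ℝ :=
  (1 - γ) * ∑' t : ℕ, γ ^ t * visit p π t a s s'

/-- The integrated discounted visitation probability `d^{π,ν}(s')`. -/
noncomputable def dnu (p : A → S → S → ℝ) (γ : ℝ) (ν : S → ℝ)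
    (π : S → A → ℝ) (s' : S) : ℝ :=
  ∑ s : S, ∑ a : A, π s a * ν s * dvisit p γ π s' a s

/-- The integrated value `V(π) = Σ_s ν(s) V^π(s)`. -/
noncomputable def IntV (p : A → S → S → ℝ) (r : S → A → ℝ) (γ : ℝ) (ν : S → ℝ)
    (π : S → A → ℝ) : ℝ :=
  ∑ s : S, ν s * Vfun p r γ π s

/-- The first-order term `η₁(π₁, π₂)`. -/
noncomputable def eta1 (p : A → S → S → ℝ) (r : S → A → ℝ) (γ : ℝ) (ν : S → ℝ)
    (π₁ π₂ : S → A → ℝ) : ℝ :=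
  ∑ a : A, ∑ s : S, π₁ s a * Adv p r γ π₂ a s * dnu p γ ν π₂ s

/-- The higher-order remainder `η₂(π₁, π₂)`. -/
noncomputable def eta2 (p : A → S → S → ℝ) (r : S → A → ℝ) (γ : ℝ) (ν : S → ℝ)
    (π₁ π₂ : S → A → ℝ) : ℝ :=
  ∑ a : A, ∑ s : S, (π₁ s a - π₂ s a) * Adv p r γ π₂ a s *
    (dnu p γ ν π₁ s - dnu p γ ν π₂ s)

/-- Total variation distance between two pmfs on a finite type. -/
noncomputable def DTV {X : Type} [Fintype X] (μ₁ μ₂ : X → ℝ) : ℝ :=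
  (1 / 2) * ∑ x : X, |μ₁ x - μ₂ x|

/-- Kullback–Leibler divergence between two pmfs on a finite type, valued in `EReal`
(equal to `⊤` if `μ₁` is not absolutely continuous w.r.t. `μ₂`). -/
noncomputable def DKL {X : Type} [Fintype X] (μ₁ μ₂ : X → ℝ) : EReal :=
  ∑ x : X, (if μ₁ x = 0 then (0 : EReal)
    else if μ₂ x = 0 then (⊤ : EReal)
    else ((μ₁ x * Real.log (μ₁ x / μ₂ x) : ℝ) : EReal))

/-- Conditional discounted stationary probability ratio `ω^π(a', s'; a, s)`. -/
noncomputable def ratio (p : A → S → S → ℝ) (γ : ℝ) (pinf : A → S → ℝ)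
    (π : S → A → ℝ) (a' : A) (s' : S) (a : A) (s : S) : ℝ :=
  (1 - γ) * ((if a' = a ∧ s' = s then 1 else 0) +
    ∑' t : ℕ, γ ^ (t + 1) * (π s' a' * visit p π (t + 1) a s s')) / pinf a' s'

/-- Integrated discounted stationary probability ratio `ω^{π,ν}(a', s')`. -/
noncomputable def rationu (p : A → S → S → ℝ) (γ : ℝ) (pinf : A → S → ℝ) (ν : S → ℝ)
    (π : S → A → ℝ) (a' : A) (s' : S) : ℝ :=
  ∑ a : A, ∑ s : S, π s a * ν s * ratio p γ pinf π a' s' a s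

/-- Marginal state distribution `p̄_t^{π,ν}` at time `t` when `S₀ ~ ν` and actions follow `π`. -/
def marg (p : A → S → S → ℝ) (π : S → A → ℝ) (ν : S → ℝ) : ℕ → S → ℝ
  | 0, s' => ν s'
  | (t + 1), s' => ∑ s : S, marg p π ν t s * ∑ a : A, π s a * p a s s'

/-- Conditional discounted state–action visitation `q^π(a', s'; a, s)`. -/
noncomputable def qvisit (p : A → S → S → ℝ) (γ : ℝ) (π : S → A → ℝ)
    (a' : A) (s' : S) (a : A) (s : S) : ℝ :=
  (1 - γ) * ((if a' = a ∧ s' = s then 1 else 0) +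
    ∑' t : ℕ, γ ^ (t + 1) * (π s' a' * visit p π (t + 1) a s s'))

/-- The estimating function `ψ(o) = ψ₁ + ψ₂(o) + ψ₃(o)` evaluated at a data tuple
`o = (s, a, rr, s')`, for nuisance functions `Ṽ = Vt`, `Ã = At`, `ω̃ = ωt`
(with `ωt a' s' a s = ω̃(a',s'; a,s)`) and `d̃ = dt` (with `dt s* a s = d̃(s* | a, s)`). -/
noncomputable def psi (γ : ℝ) (ν : S → ℝ) (π πold : S → A → ℝ)
    (Vt : S → ℝ) (At : A → S → ℝ) (ωt : A → S → A → S → ℝ) (dt : S → A → S → ℝ)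
    (s : S) (a : A) (rr : ℝ) (s' : S) : ℝ :=
  let dtnu : S → ℝ := fun sstar => ∑ a0 : A, ∑ s0 : S, πold s0 a0 * ν s0 * dt sstar a0 s0
  let ωtnu : A → S → ℝ := fun a1 s1 => ∑ a0 : A, ∑ s0 : S, πold s0 a0 * ν s0 * ωt a1 s1 a0 s0
  (∑ sstar : S, dtnu sstar * ∑ astar : A, π sstar astar * At astar sstar)
  + (1 / (1 - γ)) * ∑ sstar : S, dtnu sstar * ∑ astar : A,
      (π sstar astar - πold sstar astar) * ωt a s astar sstar *
        (rr + γ * Vt s' - Vt s - At a s)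
  + (ωtnu a s / (1 - γ)) * ∑ astar : A,
      (γ * ∑ a' : A, πold s' a' * ∑ sstar : S, dt sstar a' s' * π sstar astar * At astar sstar
       - ∑ sstar : S, dt sstar a s * π sstar astar * At astar sstar
       + (1 - γ) * π s astar * At astar s)

/-- The expectation `E[ψ(O)]` of the estimating function, where `(A₀, S₀) ~ p_∞`,
`S₁ | (A₀, S₀) ~ p(· | A₀, S₀)` and `E[R₀ | A₀, S₀] = r(S₀, A₀)`;  since `ψ` is affine
in its reward argument with a coefficient not depending on `s'`, this finite sum is
exactly the expectation of `ψ(O)`. -/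
noncomputable def Epsi (p : A → S → S → ℝ) (r : S → A → ℝ) (γ : ℝ) (ν : S → ℝ)
    (pinf : A → S → ℝ) (π πold : S → A → ℝ)
    (Vt : S → ℝ) (At : A → S → ℝ) (ωt : A → S → A → S → ℝ) (dt : S → A → S → ℝ) : ℝ :=
  ∑ a : A, ∑ s : S, pinf a s * ∑ s' : S, p a s s' *
    psi γ ν π πold Vt At ωt dt s a (r s a) s'

set_option linter.unusedSectionVars false

lemma visit_nonneg {p : A → S → S → ℝ} {π : S → A → ℝ}
    (hp : IsKernel p) (hπ : IsPolicy π) :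
    ∀ (t : ℕ) (a : A) (s s' : S), 0 ≤ visit p π t a s s' := by
  intro t
  induction t with
  | zero => intro a s s'; simp only [visit]; split <;> norm_num
  | succ t ih =>
    intro a s s'
    cases t with
    | zero => exact (hp a s).1 s'
    | succ k =>
      simp only [visit]
      refine Finset.sum_nonneg fun s'' _ => mul_nonneg (ih a s s'') ?_
      exact Finset.sum_nonneg fun a'' _ => mul_nonneg ((hπ s'').1 a'') ((hp a'' s'').1 s')

lemma visit_sum_one {p : A → S → S → ℝ} {π : S → A → ℝ}
    (hp : IsKernel p) (hπ : IsPolicy π) :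
    ∀ (t : ℕ) (a : A) (s : S), ∑ s' : S, visit p π t a s s' = 1 := by
  intro t
  induction t with
  | zero => intro a s; simp [visit]
  | succ t ih =>
    intro a s
    cases t with
    | zero => exact (hp a s).2
    | succ k =>
      simp only [visit]
      rw [Finset.sum_comm]
      have : ∀ s'' : S, ∑ s' : S, visit p π (k+1) a s s'' * ∑ a'' : A, π s'' a'' * p a'' s'' s'
          = visit p π (k+1) a s s'' := by
        intro s''
        rw [← Finset.mul_sum]
        have h1 : ∑ s' : S, ∑ a'' : A, π s'' a'' * p a'' s'' s' = 1 := by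
          rw [Finset.sum_comm]
          have : ∀ a'' : A, ∑ s' : S, π s'' a'' * p a'' s'' s' = π s'' a'' := by
            intro a''; rw [← Finset.mul_sum, (hp a'' s'').2, mul_one]
          simp_rw [this, (hπ s'').2]
        rw [h1, mul_one]
      simp_rw [this]
      exact ih a s

lemma visit_le_one {p : A → S → S → ℝ} {π : S → A → ℝ}
    (hp : IsKernel p) (hπ : IsPolicy π) (t : ℕ) (a : A) (s s' : S) :
    visit p π t a s s' ≤ 1 := by
  have := visit_sum_one hp hπ t a s
  calc visit p π t a s s' ≤ ∑ x : S, visit p π t a s x :=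
        Finset.single_le_sum (fun x _ => visit_nonneg hp hπ t a s x) (Finset.mem_univ s')
    _ = 1 := this

lemma summable_geom_mul {γ : ℝ} (hγ0 : 0 ≤ γ) (hγ1 : γ < 1) {f : ℕ → ℝ} {C : ℝ}
    (hf : ∀ t, |f t| ≤ C) : Summable (fun t => γ ^ t * f t) := by
  refine Summable.of_norm_bounded (g := fun t => C * γ ^ t)
    ((summable_geometric_of_lt_one hγ0 hγ1).mul_left C) (fun t => ?_)
  rw [Real.norm_eq_abs, abs_mul, abs_pow, abs_of_nonneg hγ0, mul_comm]
  exact mul_le_mul_of_nonneg_right (hf t) (pow_nonneg hγ0 t)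

lemma summable_geom_mul' {γ : ℝ} (hγ0 : 0 ≤ γ) (hγ1 : γ < 1) {f : ℕ → ℝ} {C : ℝ}
    (hf : ∀ t, |f t| ≤ C) : Summable (fun t => γ ^ (t + 1) * f t) := by
  have : ∀ t, |γ * f t| ≤ C := by
    intro t
    rw [abs_mul, abs_of_nonneg hγ0]
    have h0C : 0 ≤ C := (abs_nonneg _).trans (hf 0)
    calc γ * |f t| ≤ 1 * C := by
          apply mul_le_mul hγ1.le (hf t) (abs_nonneg _) zero_le_one
      _ = C := one_mul C
  have := summable_geom_mul hγ0 hγ1 this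
  refine this.congr fun t => ?_
  ring

theorem visitation_model_error_bound {S A : Type} [Fintype S] [Fintype A] [DecidableEq S] [DecidableEq A]
    [Nonempty S] [Nonempty A]
    (p phat : A → S → S → ℝ) (γ : ℝ)
    (hp : IsKernel p) (hphat : IsKernel phat) (hγ0 : 0 ≤ γ) (hγ1 : γ < 1)
    (π : S → A → ℝ) (hπ : IsPolicy π) :
    ∀ (a : A) (s : S),
      DTV (fun sstar => dvisit p γ π sstar a s) (fun sstar => dvisit phat γ π sstar a s) ≤
        γ / (1 - γ) *
          ∑ a' : A, ∑ s' : S, qvisit p γ π a' s' a s * DTV (p a' s') (phat a' s') := by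
  intro a s
  have hγpos : (0:ℝ) < 1 - γ := by linarith
  have hπnn : ∀ (s' : S) (a' : A), 0 ≤ π s' a' := fun s' a' => (hπ s').1 a'
  have hπ1 : ∀ (s' : S) (a' : A), π s' a' ≤ 1 := by
    intro s' a'
    calc π s' a' ≤ ∑ a'' : A, π s' a'' :=
          Finset.single_le_sum (fun a'' _ => hπnn s' a'') (Finset.mem_univ a')
      _ = 1 := (hπ s').2
  set δ : A → S → ℝ := fun a' s' => ∑ x : S, |p a' s' x - phat a' s' x| with hδdef
  have hδnn : ∀ a' s', 0 ≤ δ a' s' :=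
    fun a' s' => Finset.sum_nonneg fun x _ => abs_nonneg _
  have hδ2 : ∀ a' s', δ a' s' ≤ 2 := by
    intro a' s'
    calc δ a' s' ≤ ∑ x : S, (|p a' s' x| + |phat a' s' x|) :=
          Finset.sum_le_sum fun x _ => abs_sub _ _
      _ = ∑ x : S, |p a' s' x| + ∑ x : S, |phat a' s' x| := Finset.sum_add_distrib
      _ = 2 := by
          have h1 : ∑ x : S, |p a' s' x| = 1 := by
            rw [← (hp a' s').2]
            exact Finset.sum_congr rfl fun x _ => abs_of_nonneg ((hp a' s').1 x)
          have h2 : ∑ x : S, |phat a' s' x| = 1 := by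
            rw [← (hphat a' s').2]
            exact Finset.sum_congr rfl fun x _ => abs_of_nonneg ((hphat a' s').1 x)
          rw [h1, h2]; norm_num
  set E : ℕ → ℝ := fun t => ∑ x : S, |visit p π t a s x - visit phat π t a s x| with hEdef
  set F : ℕ → ℝ := fun t => Nat.casesOn t (δ a s)
      (fun k => ∑ s' : S, visit p π (k+1) a s s' * ∑ a' : A, π s' a' * δ a' s') with hFdef
  have hE0 : E 0 = 0 := by simp [hEdef, visit]
  have hE1 : E 1 = δ a s := rfl
  have hEnn : ∀ t, 0 ≤ E t := fun t => Finset.sum_nonneg fun x _ => abs_nonneg _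
  have hE2 : ∀ t, E t ≤ 2 := by
    intro t
    calc E t ≤ ∑ x : S, (|visit p π t a s x| + |visit phat π t a s x|) :=
          Finset.sum_le_sum fun x _ => abs_sub _ _
      _ = ∑ x : S, |visit p π t a s x| + ∑ x : S, |visit phat π t a s x| :=
          Finset.sum_add_distrib
      _ = 2 := by
          have h1 : ∑ x : S, |visit p π t a s x| = 1 := by
            rw [← visit_sum_one hp hπ t a s]
            exact Finset.sum_congr rfl fun x _ => abs_of_nonneg (visit_nonneg hp hπ t a s x)
          have h2 : ∑ x : S, |visit phat π t a s x| = 1 := by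
            rw [← visit_sum_one hphat hπ t a s]
            exact Finset.sum_congr rfl fun x _ => abs_of_nonneg (visit_nonneg hphat hπ t a s x)
          rw [h1, h2]; norm_num
  have hFnn : ∀ t, 0 ≤ F t := by
    intro t
    cases t with
    | zero => exact hδnn a s
    | succ k =>
      refine Finset.sum_nonneg fun s' _ => mul_nonneg (visit_nonneg hp hπ _ a s s') ?_
      exact Finset.sum_nonneg fun a' _ => mul_nonneg (hπnn s' a') (hδnn a' s')
  have hF2 : ∀ t, F t ≤ 2 := by
    intro t
    cases t with
    | zero => exact hδ2 a s
    | succ k =>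
      show ∑ s' : S, visit p π (k+1) a s s' * ∑ a' : A, π s' a' * δ a' s' ≤ 2
      calc ∑ s' : S, visit p π (k+1) a s s' * ∑ a' : A, π s' a' * δ a' s'
          ≤ ∑ s' : S, visit p π (k+1) a s s' * 2 := by
            refine Finset.sum_le_sum fun s' _ => ?_
            refine mul_le_mul_of_nonneg_left ?_ (visit_nonneg hp hπ _ a s s')
            calc ∑ a' : A, π s' a' * δ a' s' ≤ ∑ a' : A, π s' a' * 2 :=
                  Finset.sum_le_sum fun a' _ =>
                    mul_le_mul_of_nonneg_left (hδ2 a' s') (hπnn s' a')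
              _ = 2 := by rw [← Finset.sum_mul, (hπ s').2, one_mul]
        _ = 2 := by rw [← Finset.sum_mul, visit_sum_one hp hπ _ a s, one_mul]
  -- key recursion step
  have hstep : ∀ t, E (t + 1) ≤ E t + F t := by
    intro t
    cases t with
    | zero => rw [hE0, hE1, zero_add]; exact le_refl _
    | succ k =>
      have hdec : ∀ s' : S, visit p π (k+2) a s s' - visit phat π (k+2) a s s'
          = ∑ s'' : S, ((visit p π (k+1) a s s'' - visit phat π (k+1) a s s'') *
                (∑ a'' : A, π s'' a'' * phat a'' s'' s')
              + visit p π (k+1) a s s'' *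
                ∑ a'' : A, π s'' a'' * (p a'' s'' s' - phat a'' s'' s')) := by
        intro s'
        simp only [visit]
        rw [← Finset.sum_sub_distrib]
        refine Finset.sum_congr rfl fun s'' _ => ?_
        have hPQ : ∑ a'' : A, π s'' a'' * (p a'' s'' s' - phat a'' s'' s')
            = (∑ a'' : A, π s'' a'' * p a'' s'' s')
              - ∑ a'' : A, π s'' a'' * phat a'' s'' s' := by
          rw [← Finset.sum_sub_distrib]
          exact Finset.sum_congr rfl fun a'' _ => by ring
        rw [hPQ]; ring
      have hbd : ∀ s' : S, |visit p π (k+2) a s s' - visit phat π (k+2) a s s'|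
          ≤ ∑ s'' : S, (|visit p π (k+1) a s s'' - visit phat π (k+1) a s s''| *
                (∑ a'' : A, π s'' a'' * phat a'' s'' s')
              + visit p π (k+1) a s s'' *
                ∑ a'' : A, π s'' a'' * |p a'' s'' s' - phat a'' s'' s'|) := by
        intro s'
        rw [hdec s']
        refine (Finset.abs_sum_le_sum_abs _ _).trans (Finset.sum_le_sum fun s'' _ => ?_)
        refine (abs_add_le _ _).trans (add_le_add ?_ ?_)
        · rw [abs_mul, abs_of_nonneg (Finset.sum_nonneg fun a'' _ =>
            mul_nonneg (hπnn s'' a'') ((hphat a'' s'').1 s'))]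
        · rw [abs_mul, abs_of_nonneg (visit_nonneg hp hπ _ a s s'')]
          refine mul_le_mul_of_nonneg_left ?_ (visit_nonneg hp hπ _ a s s'')
          refine (Finset.abs_sum_le_sum_abs _ _).trans (Finset.sum_le_sum fun a'' _ => ?_)
          rw [abs_mul, abs_of_nonneg (hπnn s'' a'')]
      calc E (k+2) ≤ ∑ s' : S, ∑ s'' : S,
            (|visit p π (k+1) a s s'' - visit phat π (k+1) a s s''| *
                (∑ a'' : A, π s'' a'' * phat a'' s'' s')
              + visit p π (k+1) a s s'' *
                ∑ a'' : A, π s'' a'' * |p a'' s'' s' - phat a'' s'' s'|) :=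
            Finset.sum_le_sum fun s' _ => hbd s'
        _ = E (k+1) + F (k+1) := by
            rw [Finset.sum_comm]
            have hinner : ∀ s'' : S, ∑ s' : S,
                (|visit p π (k+1) a s s'' - visit phat π (k+1) a s s''| *
                    (∑ a'' : A, π s'' a'' * phat a'' s'' s')
                  + visit p π (k+1) a s s'' *
                    ∑ a'' : A, π s'' a'' * |p a'' s'' s' - phat a'' s'' s'|)
                = |visit p π (k+1) a s s'' - visit phat π (k+1) a s s''|
                  + visit p π (k+1) a s s'' * ∑ a'' : A, π s'' a'' * δ a'' s'' := by
              intro s''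
              rw [Finset.sum_add_distrib, ← Finset.mul_sum, ← Finset.mul_sum]
              have h1 : ∑ s' : S, ∑ a'' : A, π s'' a'' * phat a'' s'' s' = 1 := by
                rw [Finset.sum_comm]
                have hh : ∀ a'' : A, ∑ s' : S, π s'' a'' * phat a'' s'' s' = π s'' a'' := by
                  intro a''; rw [← Finset.mul_sum, (hphat a'' s'').2, mul_one]
                rw [Finset.sum_congr rfl fun a'' _ => hh a'']
                exact (hπ s'').2
              have h2 : ∑ s' : S, ∑ a'' : A, π s'' a'' * |p a'' s'' s' - phat a'' s'' s'|
                  = ∑ a'' : A, π s'' a'' * δ a'' s'' := by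
                rw [Finset.sum_comm]
                exact Finset.sum_congr rfl fun a'' _ => (Finset.mul_sum _ _ _).symm
              rw [h1, h2, mul_one]
            rw [Finset.sum_congr rfl fun s'' _ => hinner s'', Finset.sum_add_distrib]
  -- summability
  have hsumE : Summable (fun t => γ ^ t * E t) :=
    summable_geom_mul hγ0 hγ1 (fun t => by rw [abs_of_nonneg (hEnn t)]; exact hE2 t)
  have hsumF : Summable (fun t => γ ^ (t + 1) * F t) :=
    summable_geom_mul' hγ0 hγ1 (fun t => by rw [abs_of_nonneg (hFnn t)]; exact hF2 t)
  have hsumEshift : Summable (fun t => γ ^ (t + 1) * E (t + 1)) :=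
    summable_geom_mul' hγ0 hγ1 (fun t => by rw [abs_of_nonneg (hEnn _)]; exact hE2 _)
  have hsumEF : Summable (fun t => γ ^ (t + 1) * (E t + F t)) := by
    refine summable_geom_mul' hγ0 hγ1 (C := 4) (fun t => ?_)
    rw [abs_of_nonneg (add_nonneg (hEnn t) (hFnn t))]
    linarith [hE2 t, hF2 t]
  set U : ℝ := ∑' t : ℕ, γ ^ t * E t with hUdef
  set B : ℝ := ∑' t : ℕ, γ ^ (t + 1) * F t with hBdef
  have hBnn : 0 ≤ B :=
    tsum_nonneg fun t => mul_nonneg (pow_nonneg hγ0 _) (hFnn t)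
  have hUB : U ≤ γ * U + B := by
    have h1 : U = ∑' t : ℕ, γ ^ (t + 1) * E (t + 1) := by
      rw [hUdef, Summable.tsum_eq_zero_add hsumE, hE0]
      simp
    have h2 : (∑' t : ℕ, γ ^ (t + 1) * E (t + 1)) ≤ ∑' t : ℕ, γ ^ (t + 1) * (E t + F t) := by
      refine Summable.tsum_le_tsum (fun t => ?_) hsumEshift hsumEF
      exact mul_le_mul_of_nonneg_left (hstep t) (pow_nonneg hγ0 _)
    have h3 : (∑' t : ℕ, γ ^ (t + 1) * (E t + F t)) = γ * U + B := by
      have hh : ∀ t : ℕ, γ ^ (t + 1) * (E t + F t) = γ * (γ ^ t * E t) + γ ^ (t + 1) * F t := by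
        intro t; ring
      rw [tsum_congr hh, Summable.tsum_add ((hsumE).mul_left γ) hsumF, tsum_mul_left]
    calc U = ∑' t : ℕ, γ ^ (t + 1) * E (t + 1) := h1
      _ ≤ ∑' t : ℕ, γ ^ (t + 1) * (E t + F t) := h2
      _ = γ * U + B := h3
  have hU : U ≤ B / (1 - γ) := by
    rw [le_div_iff₀ hγpos]
    linarith
  -- LHS bound
  have hsumvp : ∀ x : S, Summable (fun t => γ ^ t * visit p π t a s x) :=
    fun x => summable_geom_mul hγ0 hγ1 (C := 1) (fun t => by
      rw [abs_of_nonneg (visit_nonneg hp hπ t a s x)]; exact visit_le_one hp hπ t a s x)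
  have hsumvphat : ∀ x : S, Summable (fun t => γ ^ t * visit phat π t a s x) :=
    fun x => summable_geom_mul hγ0 hγ1 (C := 1) (fun t => by
      rw [abs_of_nonneg (visit_nonneg hphat hπ t a s x)]; exact visit_le_one hphat hπ t a s x)
  have habsbd : ∀ (t : ℕ) (x : S), |visit p π t a s x - visit phat π t a s x| ≤ 2 := by
    intro t x
    calc |visit p π t a s x - visit phat π t a s x|
        ≤ |visit p π t a s x| + |visit phat π t a s x| := abs_sub _ _
      _ ≤ 2 := by
          rw [abs_of_nonneg (visit_nonneg hp hπ t a s x),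
            abs_of_nonneg (visit_nonneg hphat hπ t a s x)]
          linarith [visit_le_one hp hπ t a s x, visit_le_one hphat hπ t a s x]
  have hsumabs : ∀ x : S, Summable (fun t => γ ^ t *
      |visit p π t a s x - visit phat π t a s x|) :=
    fun x => summable_geom_mul hγ0 hγ1 (C := 2) (fun t => by
      rw [abs_abs]; exact habsbd t x)
  have hLHS : DTV (fun sstar => dvisit p γ π sstar a s)
      (fun sstar => dvisit phat γ π sstar a s) ≤ (1 - γ) / 2 * U := by
    have hx : ∀ x : S, |dvisit p γ π x a s - dvisit phat γ π x a s|
        ≤ (1 - γ) * ∑' t : ℕ, γ ^ t * |visit p π t a s x - visit phat π t a s x| := by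
      intro x
      have hdiff : dvisit p γ π x a s - dvisit phat γ π x a s
          = (1 - γ) * ∑' t : ℕ, (γ ^ t * visit p π t a s x - γ ^ t * visit phat π t a s x) := by
        simp only [dvisit]
        rw [← mul_sub, Summable.tsum_sub (hsumvp x) (hsumvphat x)]
      rw [hdiff, abs_mul, abs_of_nonneg hγpos.le]
      refine mul_le_mul_of_nonneg_left ?_ hγpos.le
      have hn := norm_tsum_le_tsum_norm (f := fun t =>
          γ ^ t * visit p π t a s x - γ ^ t * visit phat π t a s x) ?_
      · refine hn.trans (le_of_eq (tsum_congr fun t => ?_))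
        rw [Real.norm_eq_abs, ← mul_sub, abs_mul, abs_pow, abs_of_nonneg hγ0]
      · refine (hsumabs x).congr fun t => ?_
        show γ ^ t * |visit p π t a s x - visit phat π t a s x|
            = ‖γ ^ t * visit p π t a s x - γ ^ t * visit phat π t a s x‖
        rw [Real.norm_eq_abs, ← mul_sub, abs_mul, abs_pow, abs_of_nonneg hγ0]
    calc DTV (fun sstar => dvisit p γ π sstar a s) (fun sstar => dvisit phat γ π sstar a s)
        ≤ (1/2) * ∑ x : S, (1 - γ) * ∑' t : ℕ, γ ^ t *
            |visit p π t a s x - visit phat π t a s x| := by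
          simp only [DTV]
          exact mul_le_mul_of_nonneg_left (Finset.sum_le_sum fun x _ => hx x) (by norm_num)
      _ = (1 - γ) / 2 * U := by
          rw [← Finset.mul_sum]
          have hswap : ∑ x : S, ∑' t : ℕ, γ ^ t * |visit p π t a s x - visit phat π t a s x|
              = ∑' t : ℕ, ∑ x : S, γ ^ t * |visit p π t a s x - visit phat π t a s x| :=
            (Summable.tsum_finsetSum fun x _ => hsumabs x).symm
          rw [hswap]
          have hh : ∀ t : ℕ, ∑ x : S, γ ^ t * |visit p π t a s x - visit phat π t a s x|
              = γ ^ t * E t := fun t => (Finset.mul_sum _ _ _).symm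
          rw [tsum_congr hh, ← hUdef]
          ring
  -- RHS equals B/2
  have hDTVδ : ∀ (a' : A) (s' : S), DTV (p a' s') (phat a' s') = δ a' s' / 2 := by
    intro a' s'; simp only [DTV, hδdef]; ring
  have hgsum : ∀ (a' : A) (s' : S),
      Summable (fun t => γ ^ (t + 1) * (π s' a' * visit p π (t+1) a s s' * δ a' s')) := by
    intro a' s'
    refine summable_geom_mul' hγ0 hγ1 (C := 2) (fun t => ?_)
    have h0 : 0 ≤ π s' a' * visit p π (t+1) a s s' * δ a' s' :=
      mul_nonneg (mul_nonneg (hπnn s' a') (visit_nonneg hp hπ _ a s s')) (hδnn a' s')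
    rw [abs_of_nonneg h0]
    calc π s' a' * visit p π (t+1) a s s' * δ a' s' ≤ 1 * 1 * 2 := by
          refine mul_le_mul (mul_le_mul (hπ1 s' a') (visit_le_one hp hπ _ a s s')
            (visit_nonneg hp hπ _ a s s') zero_le_one) (hδ2 a' s') (hδnn a' s') (by norm_num)
      _ = 2 := by norm_num
  have hqsum : ∀ (a' : A) (s' : S),
      Summable (fun t => γ ^ (t + 1) * (π s' a' * visit p π (t+1) a s s')) := by
    intro a' s'
    refine summable_geom_mul' hγ0 hγ1 (C := 1) (fun t => ?_)
    have h0 : 0 ≤ π s' a' * visit p π (t+1) a s s' :=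
      mul_nonneg (hπnn s' a') (visit_nonneg hp hπ _ a s s')
    rw [abs_of_nonneg h0]
    calc π s' a' * visit p π (t+1) a s s' ≤ 1 * 1 :=
          mul_le_mul (hπ1 s' a') (visit_le_one hp hπ _ a s s')
            (visit_nonneg hp hπ _ a s s') zero_le_one
      _ = 1 := one_mul 1
  have hterm : ∀ (a' : A) (s' : S), qvisit p γ π a' s' a s * DTV (p a' s') (phat a' s')
      = (1 - γ) / 2 * ((if a' = a ∧ s' = s then 1 else 0) * δ a' s'
        + ∑' t : ℕ, γ ^ (t + 1) * (π s' a' * visit p π (t+1) a s s' * δ a' s')) := by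
    intro a' s'
    rw [hDTVδ]
    simp only [qvisit]
    have hts : (∑' t : ℕ, γ ^ (t + 1) * (π s' a' * visit p π (t+1) a s s' * δ a' s'))
        = (∑' t : ℕ, γ ^ (t + 1) * (π s' a' * visit p π (t+1) a s s')) * δ a' s' := by
      rw [← tsum_mul_right]
      exact tsum_congr fun t => by ring
    rw [hts]; ring
  have hind : ∑ a' : A, ∑ s' : S,
      (if a' = a ∧ s' = s then (1:ℝ) else 0) * δ a' s' = δ a s := by
    have hh : ∀ a' : A, ∑ s' : S, (if a' = a ∧ s' = s then (1:ℝ) else 0) * δ a' s'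
        = if a' = a then δ a' s else 0 := by
      intro a'
      by_cases h : a' = a
      · subst h; simp [Finset.sum_ite_eq']
      · simp [h]
    rw [Finset.sum_congr rfl fun a' _ => hh a']
    simp [Finset.sum_ite_eq']
  have hswap2 : ∑ a' : A, ∑ s' : S,
      ∑' t : ℕ, γ ^ (t + 1) * (π s' a' * visit p π (t+1) a s s' * δ a' s')
      = ∑' t : ℕ, γ ^ (t + 1) * F (t + 1) := by
    have h1 : ∀ a' : A, ∑ s' : S,
        ∑' t : ℕ, γ ^ (t + 1) * (π s' a' * visit p π (t+1) a s s' * δ a' s')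
        = ∑' t : ℕ, ∑ s' : S, γ ^ (t + 1) * (π s' a' * visit p π (t+1) a s s' * δ a' s') :=
      fun a' => (Summable.tsum_finsetSum fun s' _ => hgsum a' s').symm
    rw [Finset.sum_congr rfl fun a' _ => h1 a']
    have h2 : ∑ a' : A, ∑' t : ℕ, ∑ s' : S,
        γ ^ (t + 1) * (π s' a' * visit p π (t+1) a s s' * δ a' s')
        = ∑' t : ℕ, ∑ a' : A, ∑ s' : S,
            γ ^ (t + 1) * (π s' a' * visit p π (t+1) a s s' * δ a' s') :=
      (Summable.tsum_finsetSum fun a' _ => summable_sum fun s' _ => hgsum a' s').symm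
    rw [h2]
    refine tsum_congr fun t => ?_
    rw [Finset.sum_comm]
    have hF1 : γ ^ (t + 1) * F (t + 1)
        = ∑ s' : S, γ ^ (t+1) * (visit p π (t+1) a s s' * ∑ a' : A, π s' a' * δ a' s') := by
      show γ ^ (t + 1) * (∑ s' : S, visit p π (t+1) a s s' * ∑ a' : A, π s' a' * δ a' s') = _
      rw [Finset.mul_sum]
    rw [hF1]
    refine Finset.sum_congr rfl fun s' _ => ?_
    rw [Finset.mul_sum, Finset.mul_sum]
    exact Finset.sum_congr rfl fun a' _ => by ring
  have hBsplit : B = γ * F 0 + γ * ∑' t : ℕ, γ ^ (t + 1) * F (t + 1) := by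
    rw [hBdef, Summable.tsum_eq_zero_add hsumF]
    rw [← tsum_mul_left]
    congr 1
    · ring
    · exact tsum_congr fun t => by ring
  have hRHS : γ / (1 - γ) *
      ∑ a' : A, ∑ s' : S, qvisit p γ π a' s' a s * DTV (p a' s') (phat a' s') = B / 2 := by
    rw [Finset.sum_congr rfl fun a' _ => Finset.sum_congr rfl fun s' _ => hterm a' s']
    have hsplit : ∑ a' : A, ∑ s' : S, (1 - γ) / 2 *
        ((if a' = a ∧ s' = s then (1:ℝ) else 0) * δ a' s'
          + ∑' t : ℕ, γ ^ (t + 1) * (π s' a' * visit p π (t+1) a s s' * δ a' s'))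
        = (1 - γ) / 2 * ((∑ a' : A, ∑ s' : S,
            (if a' = a ∧ s' = s then (1:ℝ) else 0) * δ a' s')
          + ∑ a' : A, ∑ s' : S,
            ∑' t : ℕ, γ ^ (t + 1) * (π s' a' * visit p π (t+1) a s s' * δ a' s')) := by
      rw [mul_add, Finset.mul_sum, Finset.mul_sum]
      rw [← Finset.sum_add_distrib]
      refine Finset.sum_congr rfl fun a' _ => ?_
      rw [Finset.mul_sum, Finset.mul_sum, ← Finset.sum_add_distrib]
      exact Finset.sum_congr rfl fun s' _ => by ring
    rw [hsplit, hind, hswap2]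
    have hF0 : F 0 = δ a s := rfl
    rw [hBsplit, hF0]
    field_simp
  rw [hRHS]
  calc DTV (fun sstar => dvisit p γ π sstar a s) (fun sstar => dvisit phat γ π sstar a s)
      ≤ (1 - γ) / 2 * U := hLHS
    _ ≤ (1 - γ) / 2 * (B / (1 - γ)) := by
        exact mul_le_mul_of_nonneg_left hU (by linarith)
    _ = B / 2 := by field_simp

end VEPO
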